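/- arXiv:1601.07005 — 3 statements merged into one kernel-verified Lean document; each statement's English description precedes it below -/
import Mathlib

section
/- Let A be a C*-algebra, I and J closed two-sided ideals of A, B a C*-subalgebra of I, and X a closed subspace of I such that BX ⊆ X, XI ⊆ X, XX* ⊆ B, X*X ⊆ I, the closed span of XX* equals B, and the closed span of X*X equals I. If B ∩ J = 0, then I ∩ J = 0. -/
/-- A closed two-sided (complex) ideal, as a subset. -/
def IsClosedTwoSidedIdealIn (A : Type*) [NonUnitalNormedRing A] [Module ℂ A]
    (J : Set A) : Prop :=
  IsClosed J ∧ (0 : A) ∈ J ∧ (∀ x ∈ J, ∀ y ∈ J, x + y ∈ J) ∧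
    (∀ (c : ℂ), ∀ x ∈ J, c • x ∈ J) ∧ ∀ x ∈ J, ∀ a, a * x ∈ J ∧ x * a ∈ J

/-- If `X` is a `B`–`I` imprimitivity bimodule sitting inside the C*-algebra `A`
and `B ∩ J = 0`, then `I ∩ J = 0`. -/
theorem ideal_inter_eq_zero_of_subalgebra_inter_eq_zero
    {A : Type*} [NonUnitalNormedRing A] [StarRing A] [CStarRing A]
    [NormedSpace ℂ A] [IsScalarTower ℂ A A] [SMulCommClass ℂ A A] [StarModule ℂ A]
    [CompleteSpace A]
    (I J : Set A) (hI : IsClosedTwoSidedIdealIn A I) (hJ : IsClosedTwoSidedIdealIn A J)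
    (B : NonUnitalStarSubalgebra ℂ A) (hBclosed : IsClosed (B : Set A))
    (hBI : (B : Set A) ⊆ I)
    (X : Submodule ℂ A) (hXclosed : IsClosed (X : Set A)) (hXI : (X : Set A) ⊆ I)
    (hBX : ∀ b ∈ B, ∀ x ∈ X, b * x ∈ X)
    (hXmulI : ∀ x ∈ X, ∀ a ∈ I, x * a ∈ X)
    (hXXstar : ∀ x ∈ X, ∀ y ∈ X, x * star y ∈ B)
    (hXstarX : ∀ x ∈ X, ∀ y ∈ X, star x * y ∈ I)
    (hspanB : closure (↑(Submodule.span ℂ {z : A | ∃ x ∈ X, ∃ y ∈ X, z = x * star y}) : Set A)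
      = (B : Set A))
    (hspanI : closure (↑(Submodule.span ℂ {z : A | ∃ x ∈ X, ∃ y ∈ X, z = star x * y}) : Set A)
      = I)
    (hBJ : ∀ b ∈ B, b ∈ J → b = 0) :
    ∀ a ∈ I, a ∈ J → a = 0 := by
  intro a haI haJ
  set S : Submodule ℂ A := Submodule.span ℂ {z : A | ∃ x ∈ X, ∃ y ∈ X, z = star x * y}
  -- Step 1: for x, y ∈ X, x * a * star y = 0
  have step1 : ∀ x ∈ X, ∀ y ∈ X, x * a * star y = 0 := by
    intro x hx y hy
    have hxa : x * a ∈ X := hXmulI x hx a haI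
    have hB : (x * a) * star y ∈ B := hXXstar _ hxa y hy
    have hJ1 : x * a ∈ J := ((hJ.2.2.2.2 a haJ x).1)
    have hJ2 : (x * a) * star y ∈ J := (hJ.2.2.2.2 _ hJ1 (star y)).2
    exact hBJ _ hB hJ2
  -- Step 2: for b, c ∈ S, b * a * c = 0
  have step2 : ∀ b ∈ S, ∀ c ∈ S, b * a * c = 0 := by
    intro b hb
    induction hb using Submodule.span_induction with
    | mem g hg =>
      obtain ⟨x, hx, y, hy, rfl⟩ := hg
      intro c hc
      induction hc using Submodule.span_induction with
      | mem h hh =>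
        obtain ⟨x', hx', y', hy', rfl⟩ := hh
        have : y * a * star x' = 0 := step1 y hy x' hx'
        calc star x * y * a * (star x' * y')
            = star x * (y * a * star x') * y' := by noncomm_ring
          _ = 0 := by rw [this, mul_zero, zero_mul]
      | zero => simp
      | add u v _ _ hu hv => rw [mul_add, hu, hv, add_zero]
      | smul t u _ hu => rw [mul_smul_comm, hu, smul_zero]
    | zero => intro c _; simp
    | add u v _ _ hu hv =>
      intro c hc
      rw [add_mul, add_mul, hu c hc, hv c hc, add_zero]
    | smul t u _ hu =>
      intro c hc
      rw [smul_mul_assoc, smul_mul_assoc, hu c hc, smul_zero]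
  -- Step 3: extend to b, c ∈ I by continuity
  have step3 : ∀ b ∈ I, ∀ c ∈ I, b * a * c = 0 := by
    have key1 : ∀ c ∈ S, ∀ b ∈ I, b * a * c = 0 := by
      intro c hc b hb
      have hcl : IsClosed {b : A | b * a * c = 0} :=
        isClosed_eq (by fun_prop) continuous_const
      have : I ⊆ {b : A | b * a * c = 0} := by
        rw [← hspanI]
        exact closure_minimal (fun b hb => step2 b hb c hc) hcl
      exact this hb
    intro b hb c hc
    have hcl : IsClosed {c : A | b * a * c = 0} :=
      isClosed_eq (by fun_prop) continuous_const
    have : I ⊆ {c : A | b * a * c = 0} := by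
      rw [← hspanI]
      exact closure_minimal (fun c hc => key1 c hc b hb) hcl
    exact this hc
  -- Step 4: conclude a = 0
  have hb1 : a * star a ∈ I := (hI.2.2.2.2 a haI (star a)).2
  have hc1 : star a * a ∈ I := (hI.2.2.2.2 a haI (star a)).1
  have h0 : (a * star a) * a * (star a * a) = 0 := step3 _ hb1 _ hc1
  set u := a * star a with hu
  have hu3 : u * u * u = 0 := by
    have : u * u * u = ((a * star a) * a * (star a * a)) * star a := by
      rw [hu]; noncomm_ring
    rw [this, h0, zero_mul]
  have hu4 : (u * u) * (u * u) = 0 := by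
    have : (u * u) * (u * u) = (u * u * u) * u := by noncomm_ring
    rw [this, hu3, zero_mul]
  have hstaru : star u = u := by simp [hu, star_star, mul_comm]
  have hnu : ‖u‖ = 0 := by
    have h2 : ‖u * u‖ = ‖u‖ * ‖u‖ := by
      have := CStarRing.norm_star_mul_self (x := u)
      rwa [hstaru] at this
    have h4 : ‖(u * u) * (u * u)‖ = ‖u * u‖ * ‖u * u‖ := by
      have hs : star (u * u) = u * u := by rw [star_mul, hstaru]
      have := CStarRing.norm_star_mul_self (x := u * u)
      rwa [hs] at this
    rw [hu4, norm_zero] at h4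
    have := mul_self_eq_zero.mp h4.symm
    rw [this] at h2
    exact mul_self_eq_zero.mp h2.symm
  have hna : ‖a‖ * ‖a‖ = 0 := by
    rw [← CStarRing.norm_self_mul_star, ← hu, hnu]
  simpa using mul_self_eq_zero.mp hna
end

section
/- Let G = (G⁰, 𝒢¹, r, s) be an ultragraph and let 𝒢⁰ be the smallest subset of the power set of G⁰ containing all singletons {v} (v ∈ G⁰) and all ranges r(e) (e ∈ 𝒢¹), closed under finite unions and nonempty finite intersections. Then 𝒢⁰ equals the collection of all sets of the form (⋂_{e∈X₁} r(e)) ∪ ⋯ ∪ (⋂_{e∈Xₙ} r(e)) ∪ F, where each Xᵢ is a finite nonempty subset of 𝒢¹ and F is a finite subset of G⁰. -/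
structure Ultragraph (V : Type*) (E : Type*) where
  s : E → V
  r : E → Set V
  r_nonempty : ∀ e, (r e).Nonempty

namespace Ultragraph

variable {V E : Type*}

/-- The smallest subset of `P(G⁰)` containing all singletons and all ranges `r(e)`,
closed under finite unions and nonempty finite intersections. -/
inductive Lat (G : Ultragraph V E) : Set V → Prop
  | singleton (v : V) : Lat G {v}
  | range (e : E) : Lat G (G.r e)
  | union {A B : Set V} : Lat G A → Lat G B → Lat G (A ∪ B)
  | inter {A B : Set V} : Lat G A → Lat G B → (A ∩ B).Nonempty → Lat G (A ∩ B)

private lemma lat_nonempty {G : Ultragraph V E} {A : Set V} (h : G.Lat A) : A.Nonempty := by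
  induction h with
  | singleton v => exact ⟨v, rfl⟩
  | range e => exact G.r_nonempty e
  | union _ _ ihA _ => exact ihA.mono Set.subset_union_left
  | inter _ _ hne _ _ => exact hne

private lemma lat_biInter (G : Ultragraph V E) :
    ∀ X : Finset E, X.Nonempty → (⋂ e ∈ X, G.r e).Nonempty → G.Lat (⋂ e ∈ X, G.r e) := by
  classical
  intro X
  induction X using Finset.induction_on with
  | empty => intro h; exact absurd h (by simp)
  | @insert a X ha ih =>
    intro _ hne
    rcases X.eq_empty_or_nonempty with rfl | hX'
    · simpa using Lat.range (G := G) a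
    · rw [Finset.set_biInter_insert] at hne ⊢
      exact Lat.inter (Lat.range a)
        (ih hX' (Set.Nonempty.mono Set.inter_subset_right hne)) hne

private lemma lat_finset (G : Ultragraph V E) :
    ∀ F : Finset V, F.Nonempty → G.Lat (F : Set V) := by
  classical
  intro F
  induction F using Finset.induction_on with
  | empty => intro h; exact absurd h (by simp)
  | @insert a F ha ih =>
    intro _
    rcases F.eq_empty_or_nonempty with rfl | hF
    · simpa using Lat.singleton (G := G) a
    · rw [Finset.coe_insert, Set.insert_eq]
      exact Lat.union (Lat.singleton a) (ih hF)

private lemma lat_biUnion {ι : Type*} (G : Ultragraph V E) :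
    ∀ (s : Finset ι) (f : ι → Set V), (∀ i ∈ s, f i = ∅ ∨ G.Lat (f i)) →
      (⋃ i ∈ s, f i) = ∅ ∨ G.Lat (⋃ i ∈ s, f i) := by
  classical
  intro s
  induction s using Finset.induction_on with
  | empty => intro f _; left; simp
  | @insert a s ha ih =>
    intro f hf
    rw [Finset.set_biUnion_insert]
    rcases hf a (Finset.mem_insert_self a s) with h0 | hL
    · rw [h0, Set.empty_union]
      exact ih f fun i hi => hf i (Finset.mem_insert_of_mem hi)
    · rcases ih f (fun i hi => hf i (Finset.mem_insert_of_mem hi)) with h0 | hL'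
      · right; rw [h0, Set.union_empty]; exact hL
      · right; exact Lat.union hL hL'

/-- Tomforde's description of `𝒢⁰` (Lemma 2.12). -/
theorem lat_iff_exists_decomposition [Countable V] [Countable E]
    (G : Ultragraph V E) (A : Set V) :
    G.Lat A ↔ ∃ (n : ℕ) (Xs : Fin n → Finset E) (F : Finset V),
      (∀ i, (Xs i).Nonempty) ∧ A.Nonempty ∧
      A = (⋃ i, ⋂ e ∈ Xs i, G.r e) ∪ (F : Set V) := by
  classical
  constructor
  · intro h
    induction h with
    | singleton v =>
      exact ⟨0, Fin.elim0, {v}, fun i => i.elim0, ⟨v, rfl⟩, by simp⟩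
    | range e =>
      refine ⟨1, fun _ => {e}, ∅, fun _ => ⟨e, by simp⟩, G.r_nonempty e, ?_⟩
      simp [Set.iUnion_const]
    | @union A B hA hB ihA ihB =>
      obtain ⟨n, Xs, F, hXs, hAne, hAeq⟩ := ihA
      obtain ⟨m, Ys, F', hYs, hBne, hBeq⟩ := ihB
      refine ⟨n + m, fun i => Sum.elim Xs Ys (finSumFinEquiv.symm i), F ∪ F', ?_,
        hAne.mono Set.subset_union_left, ?_⟩
      · intro i
        rcases h : finSumFinEquiv.symm i with j | j <;> simp only [h, Sum.elim_inl, Sum.elim_inr]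
        · exact hXs j
        · exact hYs j
      · have key : (⋃ i : Fin (n + m), ⋂ e ∈ Sum.elim Xs Ys (finSumFinEquiv.symm i), G.r e)
            = (⋃ i, ⋂ e ∈ Xs i, G.r e) ∪ (⋃ j, ⋂ e ∈ Ys j, G.r e) := by
          rw [finSumFinEquiv.symm.surjective.iUnion_comp
            (fun p => ⋂ e ∈ Sum.elim Xs Ys p, G.r e)]
          rw [Set.iUnion_sum]
          simp
        rw [key, Finset.coe_union, hAeq, hBeq, Set.union_union_union_comm]
    | @inter A B hA hB hne ihA ihB =>
      obtain ⟨n, Xs, F, hXs, hAne, hAeq⟩ := ihA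
      obtain ⟨m, Ys, F', hYs, hBne, hBeq⟩ := ihB
      set U₁ : Set V := ⋃ i, ⋂ e ∈ Xs i, G.r e with hU₁
      set U₂ : Set V := ⋃ j, ⋂ e ∈ Ys j, G.r e with hU₂
      have hfin : (U₁ ∩ ↑F' ∪ ↑F ∩ U₂ ∪ ↑F ∩ ↑F').Finite := by
        refine Set.Finite.union (Set.Finite.union ?_ ?_) ?_
        · exact F'.finite_toSet.subset Set.inter_subset_right
        · exact F.finite_toSet.subset Set.inter_subset_left
        · exact F.finite_toSet.subset Set.inter_subset_left
      refine ⟨n * m, fun k => Xs ((finProdFinEquiv.symm k).1) ∪ Ys ((finProdFinEquiv.symm k).2),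
        hfin.toFinset, ?_, hne, ?_⟩
      · intro k
        exact Finset.Nonempty.mono Finset.subset_union_left (hXs _)
      · have key : (⋃ k : Fin (n * m),
            ⋂ e ∈ Xs ((finProdFinEquiv.symm k).1) ∪ Ys ((finProdFinEquiv.symm k).2), G.r e)
            = U₁ ∩ U₂ := by
          rw [finProdFinEquiv.symm.surjective.iUnion_comp
            (fun p : Fin n × Fin m => ⋂ e ∈ Xs p.1 ∪ Ys p.2, G.r e)]
          ext x
          simp only [hU₁, hU₂, Set.mem_iUnion, Set.mem_iInter, Set.mem_inter_iff,
            Finset.mem_union, Prod.exists]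
          constructor
          · rintro ⟨i, j, h⟩
            exact ⟨⟨i, fun e he => h e (Or.inl he)⟩, ⟨j, fun e he => h e (Or.inr he)⟩⟩
          · rintro ⟨⟨i, hi⟩, ⟨j, hj⟩⟩
            exact ⟨i, j, fun e he => he.elim (hi e) (hj e)⟩
        rw [key, Set.Finite.coe_toFinset, hAeq, hBeq]
        ext x
        simp only [Set.mem_inter_iff, Set.mem_union]
        tauto
  · rintro ⟨n, Xs, F, hXs, hAne, rfl⟩
    have hU : (⋃ i, ⋂ e ∈ Xs i, G.r e) = ∅ ∨ G.Lat (⋃ i, ⋂ e ∈ Xs i, G.r e) := by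
      have : (⋃ i, ⋂ e ∈ Xs i, G.r e) = ⋃ i ∈ (Finset.univ : Finset (Fin n)),
          ⋂ e ∈ Xs i, G.r e := by simp
      rw [this]
      refine lat_biUnion G Finset.univ _ fun i _ => ?_
      rcases (⋂ e ∈ Xs i, G.r e).eq_empty_or_nonempty with h0 | hne
      · exact Or.inl h0
      · exact Or.inr (lat_biInter G (Xs i) (hXs i) hne)
    rcases hU with h0 | hL
    · rw [h0, Set.empty_union] at hAne ⊢
      rcases F.eq_empty_or_nonempty with rfl | hF
      · simp at hAne
      · exact lat_finset G F hF
    · rcases F.eq_empty_or_nonempty with rfl | hF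
      · simpa using hL
      · exact Lat.union hL (lat_finset G F hF)

end Ultragraph
end

section
/- Let (X, μ) be a σ-finite measure space and f : D → R a measurable bijection (μ-a.e.) between measurable sets D, R ⊆ X with measurable inverse f⁻¹, such that the pushforward measure μ∘f on D and μ∘f⁻¹ on R are each absolutely continuous with respect to μ. Then μ restricted to D is absolutely continuous with respect to μ∘f, μ restricted to R is absolutely continuous with respect to μ∘f⁻¹, the Radon–Nikodym derivatives Φ_f = d(μ∘f)/dμ and Φ_{f⁻¹} = d(μ∘f⁻¹)/dμ are strictly positive μ-a.e. on D and R respectively, and Φ_f(x)·Φ_{f⁻¹}(f(x)) = 1 for μ-almost every x ∈ D. -/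
open MeasureTheory
open scoped ENNReal

lemma aux_sigmaFinite {X : Type*} [MeasurableSpace X] (μ : Measure X) [SigmaFinite μ]
    (D R : Set X) (hD : MeasurableSet D) (hR : MeasurableSet R)
    (f finv : X → X) (hf : Measurable f) (hfinv : Measurable finv)
    (hmf : Set.MapsTo f D R)
    (h2 : ∀ᵐ x ∂μ.restrict D, finv (f x) = x) :
    SigmaFinite ((μ.restrict D).map f) := by
  refine ⟨⟨⟨fun n => (finv ⁻¹' (spanningSets μ n) ∩ R) ∪ Rᶜ, fun n => trivial, ?_, ?_⟩⟩⟩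
  · intro n
    have hBmeas : MeasurableSet ((finv ⁻¹' (spanningSets μ n) ∩ R) ∪ Rᶜ) :=
      ((hfinv (measurableSet_spanningSets μ n)).inter hR).union hR.compl
    rw [Measure.map_apply hf hBmeas]
    have hle : (μ.restrict D) (f ⁻¹' ((finv ⁻¹' (spanningSets μ n) ∩ R) ∪ Rᶜ)) ≤
        (μ.restrict D) (spanningSets μ n) := by
      refine measure_mono_ae ?_
      filter_upwards [h2, ae_restrict_mem hD] with x hx hxD hmem
      rcases hmem with ⟨h', -⟩ | h'
      · have h'' : finv (f x) ∈ spanningSets μ n := h'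
        rwa [hx] at h''
      · exact absurd (hmf hxD) h'
    calc (μ.restrict D) (f ⁻¹' ((finv ⁻¹' (spanningSets μ n) ∩ R) ∪ Rᶜ))
        ≤ (μ.restrict D) (spanningSets μ n) := hle
      _ ≤ μ (spanningSets μ n) := Measure.restrict_apply_le _ _
      _ < ⊤ := measure_spanningSets_lt_top μ n
  · ext x
    simp only [Set.mem_iUnion, Set.mem_univ, iff_true]
    by_cases hx : x ∈ R
    · have hmem : finv x ∈ ⋃ n, spanningSets μ n := by
        rw [iUnion_spanningSets]; trivial
      obtain ⟨n, hn⟩ := Set.mem_iUnion.1 hmem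
      exact ⟨n, Or.inl ⟨hn, hx⟩⟩
    · exact ⟨0, Or.inr hx⟩

lemma aux_ac {X : Type*} [MeasurableSpace X] (μ : Measure X)
    (D R : Set X)
    (f finv : X → X) (hf : Measurable f) (hfinv : Measurable finv)
    (h2 : ∀ᵐ x ∂μ.restrict D, finv (f x) = x)
    (hac2 : (μ.restrict D).map f ≪ μ.restrict R) :
    μ.restrict D ≪ (μ.restrict R).map finv := by
  refine Measure.AbsolutelyContinuous.mk fun s hs h0 => ?_
  rw [Measure.map_apply hfinv hs] at h0
  have h0' : ((μ.restrict D).map f) (finv ⁻¹' s) = 0 := hac2 h0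
  rw [Measure.map_apply hf (hfinv hs)] at h0'
  refine le_antisymm ?_ zero_le
  calc μ.restrict D s ≤ μ.restrict D (f ⁻¹' (finv ⁻¹' s)) := by
        refine measure_mono_ae ?_
        filter_upwards [h2] with x hx hxs
        have hmem : finv (f x) ∈ s := by rw [hx]; exact hxs
        exact hmem
    _ = 0 := h0'

/-- Basic properties of the Radon–Nikodym derivatives of the two pushforward measures
attached to an a.e. measurable bijection `f : D → R` with measurable inverse. -/
theorem rnDeriv_pushforward_pos_and_mul_eq_one
    {X : Type*} [MeasurableSpace X] (μ : Measure X) [SigmaFinite μ]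
    (D R : Set X) (hD : MeasurableSet D) (hR : MeasurableSet R)
    (f finv : X → X) (hf : Measurable f) (hfinv : Measurable finv)
    (hmf : Set.MapsTo f D R) (hmfinv : Set.MapsTo finv R D)
    (h1 : ∀ᵐ x ∂μ.restrict R, f (finv x) = x)
    (h2 : ∀ᵐ x ∂μ.restrict D, finv (f x) = x)
    (hac1 : (μ.restrict R).map finv ≪ μ.restrict D)
    (hac2 : (μ.restrict D).map f ≪ μ.restrict R) :
    μ.restrict D ≪ (μ.restrict R).map finv ∧
    μ.restrict R ≪ (μ.restrict D).map f ∧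
    (∀ᵐ x ∂μ.restrict D, 0 < ((μ.restrict R).map finv).rnDeriv μ x) ∧
    (∀ᵐ x ∂μ.restrict R, 0 < ((μ.restrict D).map f).rnDeriv μ x) ∧
    ∀ᵐ x ∂μ.restrict D,
      ((μ.restrict R).map finv).rnDeriv μ x * ((μ.restrict D).map f).rnDeriv μ (f x) = 1 := by
  set ν₁ := (μ.restrict R).map finv with hν₁def
  set ν₂ := (μ.restrict D).map f with hν₂def
  haveI hSF1 : SigmaFinite ν₁ := aux_sigmaFinite μ R D hR hD finv f hfinv hf hmfinv h1
  haveI hSF2 : SigmaFinite ν₂ := aux_sigmaFinite μ D R hD hR f finv hf hfinv hmf h2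
  have hACD : μ.restrict D ≪ ν₁ := aux_ac μ D R f finv hf hfinv h2 hac2
  have hACR : μ.restrict R ≪ ν₂ := aux_ac μ R D finv f hfinv hf h1 hac1
  have hν₁μ : ν₁ ≪ μ := hac1.trans Measure.restrict_le_self.absolutelyContinuous
  have hν₂μ : ν₂ ≪ μ := hac2.trans Measure.restrict_le_self.absolutelyContinuous
  have hposD : ∀ᵐ x ∂μ.restrict D, 0 < ν₁.rnDeriv μ x :=
    hACD.ae_le (Measure.rnDeriv_pos hν₁μ)
  have hposR : ∀ᵐ x ∂μ.restrict R, 0 < ν₂.rnDeriv μ x :=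
    hACR.ae_le (Measure.rnDeriv_pos hν₂μ)
  refine ⟨hACD, hACR, hposD, hposR, ?_⟩
  set Φ₁ := ν₁.rnDeriv μ with hΦ₁def
  set Φ₂ := ν₂.rnDeriv μ with hΦ₂def
  have hm1 : Measurable Φ₁ := Measure.measurable_rnDeriv ν₁ μ
  have hm2 : Measurable Φ₂ := Measure.measurable_rnDeriv ν₂ μ
  -- ν₁ lives on D, ν₂ lives on R
  have hν₁D : ν₁.restrict D = ν₁ := by
    refine Measure.restrict_eq_self_of_ae_mem ?_
    rw [ae_iff]
    have hset : {x | ¬ x ∈ D} = Dᶜ := rfl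
    rw [hset, hν₁def, Measure.map_apply hfinv hD.compl,
      Measure.restrict_apply (hfinv hD.compl)]
    have hempty : finv ⁻¹' Dᶜ ∩ R = ∅ := by
      ext x
      simp only [Set.mem_inter_iff, Set.mem_preimage, Set.mem_compl_iff,
        Set.mem_empty_iff_false, iff_false, not_and]
      intro hnd hr
      exact hnd (hmfinv hr)
    rw [hempty, measure_empty]
  have hν₂R : ν₂.restrict R = ν₂ := by
    refine Measure.restrict_eq_self_of_ae_mem ?_
    rw [ae_iff]
    have hset : {x | ¬ x ∈ R} = Rᶜ := rfl
    rw [hset, hν₂def, Measure.map_apply hf hR.compl,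
      Measure.restrict_apply (hf hR.compl)]
    have hempty : f ⁻¹' Rᶜ ∩ D = ∅ := by
      ext x
      simp only [Set.mem_inter_iff, Set.mem_preimage, Set.mem_compl_iff,
        Set.mem_empty_iff_false, iff_false, not_and]
      intro hnd hd
      exact hnd (hmf hd)
    rw [hempty, measure_empty]
  have hwd1 : (μ.restrict D).withDensity Φ₁ = ν₁ := by
    rw [← restrict_withDensity hD, Measure.withDensity_rnDeriv_eq _ _ hν₁μ, hν₁D]
  have hwd2 : (μ.restrict R).withDensity Φ₂ = ν₂ := by
    rw [← restrict_withDensity hR, Measure.withDensity_rnDeriv_eq _ _ hν₂μ, hν₂R]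
  have hkey : (μ.restrict D).withDensity (fun x => Φ₁ x * Φ₂ (f x)) = μ.restrict D := by
    ext s hs
    have hg : Measurable (s.indicator (fun y => Φ₂ (f y))) :=
      (hm2.comp hf).indicator hs
    have hh : Measurable ((finv ⁻¹' s).indicator (1 : X → ℝ≥0∞)) :=
      measurable_one.indicator (hfinv hs)
    calc ((μ.restrict D).withDensity (fun x => Φ₁ x * Φ₂ (f x))) s
        = ∫⁻ x in s, Φ₁ x * Φ₂ (f x) ∂(μ.restrict D) := withDensity_apply _ hs
      _ = ∫⁻ x, s.indicator (fun x => Φ₁ x * Φ₂ (f x)) x ∂(μ.restrict D) :=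
          (lintegral_indicator hs _).symm
      _ = ∫⁻ x, (Φ₁ * s.indicator (fun y => Φ₂ (f y))) x ∂(μ.restrict D) := by
          refine lintegral_congr fun x => ?_
          by_cases hx : x ∈ s <;> simp [Set.indicator, hx]
      _ = ∫⁻ x, s.indicator (fun y => Φ₂ (f y)) x ∂((μ.restrict D).withDensity Φ₁) :=
          (lintegral_withDensity_eq_lintegral_mul _ hm1 hg).symm
      _ = ∫⁻ x, s.indicator (fun y => Φ₂ (f y)) x ∂ν₁ := by rw [hwd1]
      _ = ∫⁻ y, s.indicator (fun y => Φ₂ (f y)) (finv y) ∂(μ.restrict R) :=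
          lintegral_map hg hfinv
      _ = ∫⁻ y, (Φ₂ * (finv ⁻¹' s).indicator (1 : X → ℝ≥0∞)) y ∂(μ.restrict R) := by
          refine lintegral_congr_ae ?_
          filter_upwards [h1] with y hy
          by_cases hys : finv y ∈ s <;>
            simp [Set.indicator, hys, hy]
      _ = ∫⁻ y, (finv ⁻¹' s).indicator (1 : X → ℝ≥0∞) y ∂((μ.restrict R).withDensity Φ₂) :=
          (lintegral_withDensity_eq_lintegral_mul _ hm2 hh).symm
      _ = ∫⁻ y, (finv ⁻¹' s).indicator (1 : X → ℝ≥0∞) y ∂ν₂ := by rw [hwd2]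
      _ = ∫⁻ x, (finv ⁻¹' s).indicator (1 : X → ℝ≥0∞) (f x) ∂(μ.restrict D) :=
          lintegral_map hh hf
      _ = ∫⁻ x, s.indicator (1 : X → ℝ≥0∞) x ∂(μ.restrict D) := by
          refine lintegral_congr_ae ?_
          filter_upwards [h2] with x hx
          by_cases hxs : x ∈ s <;>
            simp [Set.indicator, hxs, hx]
      _ = (μ.restrict D) s := lintegral_indicator_one hs
  have hFm : Measurable (fun x => Φ₁ x * Φ₂ (f x)) := hm1.mul (hm2.comp hf)
  have hrd := Measure.rnDeriv_withDensity (μ.restrict D) hFm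
  rw [hkey] at hrd
  filter_upwards [hrd, Measure.rnDeriv_self (μ.restrict D)] with x hx hx1
  rw [← hx, hx1]
end
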